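/- There is a universal constant a > 0 with the following property: if X is an n-dimensional subspace of C^k_∞ (k×k matrices with operator norm) that is K-isomorphic to ℓ^n_1, then n ≤ a K² log k. -/

import Mathlib

/-- The `C*`-operator norm of a `k × k` complex matrix (acting on `ℓ²ₖ`). -/
noncomputable def matrixOpNorm {k : ℕ} (x : Matrix (Fin k) (Fin k) ℂ) : ℝ :=
  ‖Matrix.toEuclideanCLM (𝕜 := ℂ) x‖

open scoped Matrix.Norms.L2Operator

namespace Statement11Aux

lemma matrixOpNorm_eq_norm {k : ℕ} (x : Matrix (Fin k) (Fin k) ℂ) : matrixOpNorm x = ‖x‖ := rfl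

/-! ### Operator norm vs entries, Frobenius, trace -/

lemma coord_le_norm {k : ℕ} (v : EuclideanSpace ℂ (Fin k)) (i : Fin k) : ‖v i‖ ≤ ‖v‖ := by
  rw [EuclideanSpace.norm_eq, show ‖v i‖ = Real.sqrt (‖v i‖^2) by rw [Real.sqrt_sq (norm_nonneg _)]]
  exact Real.sqrt_le_sqrt <| Finset.single_le_sum (f := fun j => ‖v j‖^2)
    (fun j _ => sq_nonneg _) (Finset.mem_univ i)

lemma entry_le_opNorm {k : ℕ} (M : Matrix (Fin k) (Fin k) ℂ) (i j : Fin k) : ‖M i j‖ ≤ ‖M‖ := by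
  have h := Matrix.l2_opNorm_mulVec M (EuclideanSpace.single j 1)
  rw [EuclideanSpace.norm_single, norm_one, mul_one] at h
  refine le_trans (le_trans ?_ (coord_le_norm
    ((EuclideanSpace.equiv (Fin k) ℂ).symm (M.mulVec (EuclideanSpace.single j 1 : EuclideanSpace ℂ (Fin k)))) i)) h
  have : ((EuclideanSpace.equiv (Fin k) ℂ).symm
      (M.mulVec (EuclideanSpace.single j 1 : EuclideanSpace ℂ (Fin k)))) i = M i j := by
    show (M.mulVec (Pi.single j 1)) i = M i j
    rw [Matrix.mulVec_single]
    exact mul_one _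
  rw [this]

lemma trace_le_opNorm {k : ℕ} (M : Matrix (Fin k) (Fin k) ℂ) : ‖Matrix.trace M‖ ≤ k * ‖M‖ := by
  calc ‖Matrix.trace M‖ ≤ ∑ i : Fin k, ‖M i i‖ := norm_sum_le _ _
    _ ≤ ∑ _i : Fin k, ‖M‖ := Finset.sum_le_sum fun i _ => entry_le_opNorm M i i
    _ = k * ‖M‖ := by simp [Finset.sum_const, nsmul_eq_mul]

lemma opNorm_le_frob {k : ℕ} (M : Matrix (Fin k) (Fin k) ℂ) :
    ‖M‖ ≤ Real.sqrt (∑ i : Fin k, ∑ j : Fin k, ‖M i j‖^2) := by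
  rw [Matrix.l2_opNorm_def]
  refine ContinuousLinearMap.opNorm_le_bound _ (Real.sqrt_nonneg _) fun x => ?_
  have hrow : ∀ i : Fin k, ‖(M.mulVec (WithLp.equiv 2 _ x)) i‖^2 ≤ (∑ j, ‖M i j‖^2) * ‖x‖^2 := by
    intro i
    have h1 : ‖(M.mulVec (WithLp.equiv 2 _ x)) i‖ ≤ ∑ j, ‖M i j‖ * ‖x j‖ := by
      have he : (M.mulVec (WithLp.equiv 2 _ x)) i = ∑ j, M i j * x j := rfl
      rw [he]
      refine (norm_sum_le Finset.univ (fun j => M i j * x j)).trans ?_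
      exact le_of_eq (Finset.sum_congr rfl (fun j _ => by rw [norm_mul]))
    have h2 : (∑ j, ‖M i j‖ * ‖x j‖)^2 ≤ (∑ j, ‖M i j‖^2) * (∑ j, ‖x j‖^2) :=
      Finset.sum_mul_sq_le_sq_mul_sq _ _ _
    have h3 : (∑ j : Fin k, ‖x j‖^2) = ‖x‖^2 := by
      rw [EuclideanSpace.norm_eq, Real.sq_sqrt]
      positivity
    calc ‖(M.mulVec (WithLp.equiv 2 _ x)) i‖^2 ≤ (∑ j, ‖M i j‖ * ‖x j‖)^2 :=
          pow_le_pow_left₀ (norm_nonneg _) h1 2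
      _ ≤ _ := by rw [← h3]; exact h2
  calc ‖(EuclideanSpace.equiv (Fin k) ℂ).symm (M.mulVec (WithLp.equiv 2 _ x))‖
      = Real.sqrt (∑ i, ‖(M.mulVec (WithLp.equiv 2 _ x)) i‖^2) := EuclideanSpace.norm_eq _
    _ ≤ Real.sqrt (∑ i : Fin k, (∑ j, ‖M i j‖^2) * ‖x‖^2) :=
        Real.sqrt_le_sqrt (Finset.sum_le_sum fun i _ => hrow i)
    _ = Real.sqrt ((∑ i : Fin k, ∑ j, ‖M i j‖^2) * ‖x‖^2) := by rw [← Finset.sum_mul]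
    _ = Real.sqrt (∑ i : Fin k, ∑ j, ‖M i j‖^2) * ‖x‖ := by
        rw [Real.sqrt_mul (by positivity), Real.sqrt_sq (norm_nonneg _)]

lemma re_trace_star_mul {k : ℕ} (N : Matrix (Fin k) (Fin k) ℂ) :
    (Matrix.trace (star N * N)).re = ∑ i : Fin k, ∑ j : Fin k, ‖N j i‖^2 := by
  rw [Matrix.trace]
  simp only [Matrix.diag_apply, Matrix.mul_apply, Matrix.star_apply]
  rw [Complex.re_sum]
  refine Finset.sum_congr rfl fun i _ => ?_
  rw [Complex.re_sum]
  refine Finset.sum_congr rfl fun j _ => ?_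
  rw [show (star (N j i) * N j i) = ((Complex.normSq (N j i) : ℝ) : ℂ) by
    rw [Complex.star_def, ← Complex.normSq_eq_conj_mul_self]]
  simp [Complex.normSq_eq_norm_sq, ← Complex.ofReal_pow]

lemma key_power_trace {k : ℕ} (M : Matrix (Fin k) (Fin k) ℂ) (s : ℕ) (hs : 1 ≤ s) :
    ‖M‖ ^ (2 * 2^s) ≤ (Matrix.trace ((M * star M)^(2^s))).re := by
  obtain ⟨s', rfl⟩ : ∃ s', s = s' + 1 := ⟨s-1, (Nat.succ_pred_eq_of_pos hs).symm⟩
  have hpow : (2:ℕ)^(s'+1) = 2^s' + 2^s' := by rw [pow_succ, mul_two]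
  set a := M * star M with ha
  have hsa : IsSelfAdjoint a := IsSelfAdjoint.mul_star_self M
  set N := a ^ (2^s') with hN
  have hNsa : IsSelfAdjoint N := hsa.pow _
  have h1 : a ^ (2^(s'+1)) = star N * N := by
    rw [hNsa.star_eq, hN, ← pow_add, hpow]
  have h3 : ‖N‖^2 ≤ ∑ i, ∑ j, ‖N j i‖^2 := by
    calc ‖N‖^2 ≤ (Real.sqrt (∑ i, ∑ j, ‖N i j‖^2))^2 :=
          pow_le_pow_left₀ (norm_nonneg _) (opNorm_le_frob N) 2
      _ = ∑ i, ∑ j, ‖N i j‖^2 := Real.sq_sqrt (by positivity)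
      _ = ∑ i, ∑ j, ‖N j i‖^2 := Finset.sum_comm
  have h6 : ‖N‖ = ‖a‖^(2^s') := by
    rw [hN, ← coe_nnnorm, hsa.nnnorm_pow_two_pow s', NNReal.coe_pow, coe_nnnorm]
  have h4 : ‖N‖ = ‖M‖ ^ (2^s' + 2^s') := by
    rw [h6, ha, CStarRing.norm_self_mul_star, ← sq, ← pow_mul, two_mul]
  have hc : ‖M‖ ^ (2 * 2^(s'+1)) ≤ ∑ i, ∑ j, ‖N j i‖^2 := by
    calc ‖M‖ ^ (2 * 2^(s'+1)) = (‖M‖ ^ (2^s' + 2^s'))^2 := by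
          rw [← pow_mul]; congr 1; omega
      _ = ‖N‖^2 := by rw [h4]
      _ ≤ ∑ i, ∑ j, ‖N j i‖^2 := h3
  have he : (∑ i, ∑ j, ‖N j i‖^2) = (Matrix.trace ((M * star M) ^ (2^(s'+1)))).re := by
    rw [← ha, h1, re_trace_star_mul]
  rw [← he]
  exact hc

/-! ### Noncommutative expansions -/

lemma pow_sum_expand {ι : Type*} [Fintype ι] {R : Type*} [Ring R] (f : ι → R) (m : ℕ) :
    (∑ i, f i) ^ m = ∑ g : Fin m → ι, (List.ofFn (fun t => f (g t))).prod := by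
  induction m with
  | zero => simp
  | succ m ih =>
    calc (∑ i, f i) ^ (m+1)
        = ∑ p : ι × (Fin m → ι), f p.1 * (List.ofFn fun t => f (p.2 t)).prod := by
          rw [pow_succ', ih, Finset.sum_mul]
          simp_rw [Finset.mul_sum]
          rw [Fintype.sum_prod_type]
      _ = ∑ g : Fin (m+1) → ι, (List.ofFn fun t => f (g t)).prod := by
          apply Fintype.sum_equiv (Fin.consEquiv fun _ => ι)
          intro p
          rw [List.ofFn_succ, List.prod_cons]
          simp [Fin.consEquiv]

lemma ofFn_smul_prod {R : Type*} [Ring R] [Algebra ℂ R] :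
    ∀ {m : ℕ} (c : Fin m → ℂ) (f : Fin m → R),
      (List.ofFn fun t => c t • f t).prod = (∏ t, c t) • (List.ofFn f).prod
  | 0, c, f => by simp
  | (m+1), c, f => by
    rw [List.ofFn_succ, List.prod_cons, List.ofFn_succ (f := f), List.prod_cons,
      ofFn_smul_prod (fun t => c t.succ) (fun t => f t.succ), Fin.prod_univ_succ]
    rw [smul_mul_smul_comm]

/-! ### Random signs -/

noncomputable def sgn (b : Bool) : ℝ := if b then 1 else -1

lemma word_norm_le {k m : ℕ} (hm : m ≠ 0) (f : Fin m → Matrix (Fin k) (Fin k) ℂ)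
    (hf : ∀ t, ‖f t‖ ≤ 1) : ‖(List.ofFn f).prod‖ ≤ 1 := by
  have hne : List.ofFn f ≠ [] := by
    intro h
    have h2 := congrArg List.length h
    simp only [List.length_ofFn, List.length_nil] at h2
    exact hm h2
  refine (List.norm_prod_le' hne).trans ?_
  rw [List.map_ofFn, List.prod_ofFn]
  exact Finset.prod_le_one (fun t _ => norm_nonneg _) (fun t _ => hf t)

lemma prod_sgn_fiber {m n : ℕ} (q : Fin m → Fin n) (ε : Fin n → Bool) :
    ∏ t, sgn (ε (q t)) = ∏ i, sgn (ε i) ^ (Finset.univ.filter fun t => q t = i).card := by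
  rw [← Finset.prod_fiberwise_of_maps_to (g := q) (fun t _ => Finset.mem_univ (q t))
    (fun t => sgn (ε (q t)))]
  refine Finset.prod_congr rfl fun i _ => ?_
  rw [Finset.prod_congr rfl (fun t ht => by rw [(Finset.mem_filter.mp ht).2] :
      ∀ t ∈ Finset.univ.filter fun t => q t = i, sgn (ε (q t)) = sgn (ε i)),
    Finset.prod_const]

lemma sum_coef_nonneg {n m : ℕ} (q : Fin m → Fin n × Fin n) :
    0 ≤ ∑ ε : Fin n → Bool, ∏ t, sgn (ε (q t).1) * sgn (ε (q t).2) := by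
  have hsplit : ∀ ε : Fin n → Bool, ∏ t, sgn (ε (q t).1) * sgn (ε (q t).2)
      = ∏ i, sgn (ε i) ^ ((Finset.univ.filter fun t => (q t).1 = i).card
          + (Finset.univ.filter fun t => (q t).2 = i).card) := by
    intro ε
    rw [Finset.prod_mul_distrib, prod_sgn_fiber (fun t => (q t).1) ε,
      prod_sgn_fiber (fun t => (q t).2) ε, ← Finset.prod_mul_distrib]
    exact Finset.prod_congr rfl fun i _ => (pow_add _ _ _).symm
  simp_rw [hsplit]
  have h3 := Finset.prod_univ_sum (fun _ : Fin n => (Finset.univ : Finset Bool))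
    (fun i b => sgn b ^ ((Finset.univ.filter fun t => (q t).1 = i).card
          + (Finset.univ.filter fun t => (q t).2 = i).card))
  rw [Fintype.piFinset_univ] at h3
  rw [← h3]
  refine Finset.prod_nonneg fun i _ => ?_
  rw [Fintype.sum_bool]
  have ht : sgn true = 1 := rfl
  have hf : sgn false = -1 := rfl
  rw [ht, hf, one_pow]
  rcases neg_one_pow_eq_or ℝ ((Finset.univ.filter fun t => (q t).1 = i).card
          + (Finset.univ.filter fun t => (q t).2 = i).card) with h | h <;> rw [h] <;> norm_num

lemma S_pow_expand {k n : ℕ} (A : Fin n → Matrix (Fin k) (Fin k) ℂ) (ε : Fin n → Bool) (m : ℕ) :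
    ((∑ i, (sgn (ε i) : ℂ) • A i) * star (∑ i, (sgn (ε i) : ℂ) • A i)) ^ m
      = ∑ g : Fin m → Fin n × Fin n,
          ((∏ t, sgn (ε (g t).1) * sgn (ε (g t).2) : ℝ) : ℂ) •
            (List.ofFn fun t => A (g t).1 * star (A (g t).2)).prod := by
  have hstar : star (∑ i, (sgn (ε i) : ℂ) • A i) = ∑ i, (sgn (ε i) : ℂ) • star (A i) := by
    rw [star_sum]
    exact Finset.sum_congr rfl fun i _ => by
      rw [star_smul, Complex.star_def, Complex.conj_ofReal]
  have hSS : (∑ i, (sgn (ε i) : ℂ) • A i) * star (∑ i, (sgn (ε i) : ℂ) • A i)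
      = ∑ p : Fin n × Fin n, ((sgn (ε p.1) * sgn (ε p.2) : ℝ) : ℂ) • (A p.1 * star (A p.2)) := by
    rw [hstar, Finset.sum_mul_sum, Fintype.sum_prod_type]
    refine Finset.sum_congr rfl fun i _ => Finset.sum_congr rfl fun j _ => ?_
    rw [smul_mul_smul_comm, Complex.ofReal_mul]
  rw [hSS, pow_sum_expand]
  refine Finset.sum_congr rfl fun g _ => ?_
  rw [ofFn_smul_prod (fun t => ((sgn (ε (g t).1) * sgn (ε (g t).2) : ℝ) : ℂ))
    (fun t => A (g t).1 * star (A (g t).2))]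
  rw [← Complex.ofReal_prod]

lemma trace_re_expand {k n : ℕ} (A : Fin n → Matrix (Fin k) (Fin k) ℂ) (ε : Fin n → Bool) (m : ℕ) :
    (Matrix.trace (((∑ i, (sgn (ε i) : ℂ) • A i) * star (∑ i, (sgn (ε i) : ℂ) • A i)) ^ m)).re
      = ∑ g : Fin m → Fin n × Fin n, (∏ t, sgn (ε (g t).1) * sgn (ε (g t).2)) *
          (Matrix.trace ((List.ofFn fun t => A (g t).1 * star (A (g t).2)).prod)).re := by
  rw [S_pow_expand, Matrix.trace_sum, Complex.re_sum]
  refine Finset.sum_congr rfl fun g _ => ?_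
  rw [Matrix.trace_smul, smul_eq_mul, Complex.re_ofReal_mul]

lemma sum_g_coef {n : ℕ} (m : ℕ) (ε : Fin n → Bool) :
    ∑ g : Fin m → Fin n × Fin n, ∏ t, sgn (ε (g t).1) * sgn (ε (g t).2)
      = ((∑ i, sgn (ε i))^2)^m := by
  have h2 : ∑ p : Fin n × Fin n, sgn (ε p.1) * sgn (ε p.2) = (∑ i, sgn (ε i))^2 := by
    rw [Fintype.sum_prod_type, sq, Finset.sum_mul_sum]
  rw [← h2, pow_sum_expand]
  exact Finset.sum_congr rfl fun g _ => by rw [List.prod_ofFn]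

/-! ### Scalar Khintchine -/

lemma sum_exp_rad (n : ℕ) (μ : ℝ) :
    ∑ ε : Fin n → Bool, Real.exp (μ * ∑ i, sgn (ε i)) = (Real.exp μ + Real.exp (-μ))^n := by
  have h1 : ∀ ε : Fin n → Bool, Real.exp (μ * ∑ i, sgn (ε i))
      = ∏ i, Real.exp (μ * sgn (ε i)) := by
    intro ε
    rw [Finset.mul_sum, Real.exp_sum]
  simp_rw [h1]
  have h3 := Finset.prod_univ_sum (fun _ : Fin n => (Finset.univ : Finset Bool))
    (fun _ b => Real.exp (μ * sgn b))
  rw [Fintype.piFinset_univ] at h3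
  rw [← h3]
  have h2 : ∀ i : Fin n, ∑ b : Bool, Real.exp (μ * sgn b) = Real.exp μ + Real.exp (-μ) := by
    intro i
    rw [Fintype.sum_bool]
    simp [sgn]
  rw [Finset.prod_congr rfl fun i _ => h2 i, Finset.prod_const, Finset.card_univ, Fintype.card_fin]

lemma pow_le_factorial_mul_exp {x : ℝ} (hx : 0 ≤ x) (j : ℕ) :
    x ^ j ≤ (Nat.factorial j : ℝ) * Real.exp x := by
  have h := Real.sum_le_exp_of_nonneg hx (j+1)
  have h2 : x ^ j / (Nat.factorial j : ℝ) ≤ Real.exp x :=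
    le_trans (Finset.single_le_sum (f := fun i => x^i / (Nat.factorial i : ℝ))
      (fun i _ => by positivity) (Finset.self_mem_range_succ j)) h
  have hj : (0:ℝ) < (Nat.factorial j : ℝ) := by exact_mod_cast j.factorial_pos
  calc x ^ j = (x ^ j / (Nat.factorial j : ℝ)) * (Nat.factorial j : ℝ) := by field_simp
    _ ≤ Real.exp x * (Nat.factorial j : ℝ) := by gcongr
    _ = (Nat.factorial j : ℝ) * Real.exp x := mul_comm _ _

lemma khintchine (n m : ℕ) (hn : 1 ≤ n) (hm : 1 ≤ m) :
    ∑ ε : Fin n → Bool, (∑ i, sgn (ε i)) ^ (2*m) ≤ (2:ℝ)^n * (2 * (6*m*n)^m) := by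
  have hn' : (0:ℝ) < n := by exact_mod_cast hn
  have hm' : (0:ℝ) < m := by exact_mod_cast hm
  set L : ℝ := Real.sqrt (2*m/n) with hL
  have hL2 : L^2 = 2*m/n := Real.sq_sqrt (by positivity)
  have hLpos : 0 < L := Real.sqrt_pos.mpr (by positivity)
  have hfacpos : (0:ℝ) < (Nat.factorial (2*m) : ℝ) := by exact_mod_cast (2*m).factorial_pos
  have hpt : ∀ ε : Fin n → Bool, (∑ i, sgn (ε i)) ^ (2*m) ≤
      (Nat.factorial (2*m) : ℝ) / L^(2*m) *
        (Real.exp (L * ∑ i, sgn (ε i)) + Real.exp (-L * ∑ i, sgn (ε i))) := by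
    intro ε
    set X : ℝ := ∑ i, sgn (ε i) with hX
    have habs : X ^ (2*m) = |X| ^ (2*m) := ((even_two_mul m).pow_abs X).symm
    have h1 : (L * |X|) ^ (2*m) ≤ (Nat.factorial (2*m) : ℝ) * Real.exp (L * |X|) :=
      pow_le_factorial_mul_exp (by positivity) (2*m)
    have h2 : Real.exp (L * |X|) ≤ Real.exp (L * X) + Real.exp (-L * X) := by
      rcases abs_cases X with ⟨h, _⟩ | ⟨h, _⟩
      · rw [h]; nlinarith [Real.exp_pos (-L * X)]
      · rw [h, show L * -X = -L * X by ring]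
        nlinarith [Real.exp_pos (L * X)]
    rw [habs, div_mul_eq_mul_div, le_div_iff₀ (by positivity)]
    calc |X| ^ (2*m) * L^(2*m) = (L * |X|)^(2*m) := by rw [mul_pow]; ring
      _ ≤ (Nat.factorial (2*m) : ℝ) * Real.exp (L * |X|) := h1
      _ ≤ (Nat.factorial (2*m) : ℝ) * (Real.exp (L * X) + Real.exp (-L * X)) := by gcongr
  have hsum : ∑ ε : Fin n → Bool, (∑ i, sgn (ε i)) ^ (2*m)
      ≤ (Nat.factorial (2*m) : ℝ) / L^(2*m) * (2 * (Real.exp L + Real.exp (-L))^n) := by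
    calc ∑ ε : Fin n → Bool, (∑ i, sgn (ε i)) ^ (2*m)
        ≤ ∑ ε : Fin n → Bool, (Nat.factorial (2*m) : ℝ) / L^(2*m) *
            (Real.exp (L * ∑ i, sgn (ε i)) + Real.exp (-L * ∑ i, sgn (ε i))) :=
          Finset.sum_le_sum fun ε _ => hpt ε
      _ = (Nat.factorial (2*m) : ℝ) / L^(2*m) *
            (∑ ε : Fin n → Bool, Real.exp (L * ∑ i, sgn (ε i))
            + ∑ ε : Fin n → Bool, Real.exp (-L * ∑ i, sgn (ε i))) := by
          rw [← Finset.mul_sum, Finset.sum_add_distrib]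
      _ = (Nat.factorial (2*m) : ℝ) / L^(2*m) * ((Real.exp L + Real.exp (-L))^n
            + (Real.exp (-L) + Real.exp (- -L))^n) := by
          have e1 := sum_exp_rad n L
          have e2 := sum_exp_rad n (-L)
          simp_rw [neg_mul] at e2 ⊢
          rw [e1, e2]
      _ = (Nat.factorial (2*m) : ℝ) / L^(2*m) * (2 * (Real.exp L + Real.exp (-L))^n) := by
          rw [neg_neg]; ring
  refine hsum.trans ?_
  have hcosh : Real.exp L + Real.exp (-L) ≤ 2 * Real.exp (L^2/2) := by
    have := Real.cosh_le_exp_half_sq L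
    rw [Real.cosh_eq] at this
    linarith
  have hexp : (2 * Real.exp (L^2/2))^n = 2^n * Real.exp m := by
    rw [mul_pow, ← Real.exp_nat_mul]
    congr 1
    rw [hL2]
    field_simp
  have he3 : Real.exp 1 ≤ 3 := by linarith [Real.exp_one_lt_d9]
  have hexpm : Real.exp m ≤ 3^m := by
    rw [show ((m:ℝ)) = (m:ℝ) * 1 by ring, Real.exp_nat_mul]
    exact pow_le_pow_left₀ (Real.exp_pos 1).le he3 m
  have hfac : (Nat.factorial (2*m) : ℝ) ≤ (2*(m:ℝ))^(2*m) := by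
    calc (Nat.factorial (2*m) : ℝ) ≤ ((2*m : ℕ) : ℝ)^(2*m) := by
          exact_mod_cast Nat.factorial_le_pow (2*m)
      _ = (2*(m:ℝ))^(2*m) := by push_cast; ring_nf
  have hL2m : L^(2*m) = (2*(m:ℝ)/n)^m := by rw [pow_mul, hL2]
  have hq : (0:ℝ) < (2*(m:ℝ)/n)^m := by positivity
  have hkey : (Nat.factorial (2*m) : ℝ) * 3^m / (2*(m:ℝ)/n)^m ≤ (6*m*n)^m := by
    rw [div_le_iff₀ hq, ← mul_pow]
    have h12 : (6*(m:ℝ)*n) * (2*(m:ℝ)/n) = 12*(m:ℝ)^2 := by field_simp; ring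
    rw [h12]
    calc (Nat.factorial (2*m) : ℝ) * 3^m ≤ (2*(m:ℝ))^(2*m) * 3^m := by gcongr
      _ = (12*(m:ℝ)^2)^m := by rw [pow_mul, ← mul_pow]; congr 1; ring
  calc (Nat.factorial (2*m) : ℝ) / L^(2*m) * (2 * (Real.exp L + Real.exp (-L))^n)
      ≤ (Nat.factorial (2*m) : ℝ) / L^(2*m) * (2 * (2^n * Real.exp m)) := by
        have hstep1 : (Real.exp L + Real.exp (-L))^n ≤ 2^n * Real.exp m := by
          rw [← hexp]
          exact pow_le_pow_left₀ (by positivity) hcosh n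
        have hd : (0:ℝ) ≤ (Nat.factorial (2*m) : ℝ) / L^(2*m) := by positivity
        gcongr
    _ ≤ (Nat.factorial (2*m) : ℝ) / L^(2*m) * (2 * (2^n * 3^m)) := by
        have hd : (0:ℝ) ≤ (Nat.factorial (2*m) : ℝ) / L^(2*m) := by positivity
        gcongr
    _ = (2:ℝ)^n * (2 * ((Nat.factorial (2*m) : ℝ) * 3^m / (2*(m:ℝ)/n)^m)) := by
        rw [hL2m]; ring
    _ ≤ (2:ℝ)^n * (2 * (6*m*n)^m) := by gcongr

lemma piLp_one_norm {n : ℕ} (x : ∀ _ : Fin n, ℂ) :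
    ‖(WithLp.equiv 1 (∀ _ : Fin n, ℂ)).symm x‖ = ∑ i, ‖x i‖ := by
  rw [PiLp.norm_eq_sum (p := 1) (by norm_num)]
  simp

end Statement11Aux

open Statement11Aux in
set_option maxHeartbeats 1000000 in
/-- there is a universal constant `a > 0` such that if an `n`-dimensional
subspace of `C^k_∞` (matrices with the operator norm) is `K`-isomorphic to `ℓ¹ₙ`
(witnessed by a normalized embedding `Γ` with `‖Γ‖ ≤ 1` and ``‖Γ⁻¹‖ ≤ K`), then
`n ≤ a K² log k`. -/
theorem ell1_embedding_into_matrices_dimension_bound :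
    ∃ a : ℝ, 0 < a ∧ ∀ (n k : ℕ) (K : ℝ), 1 ≤ K → 2 ≤ k →
      ∀ Γ : PiLp 1 (fun _ : Fin n => ℂ) →ₗ[ℂ] Matrix (Fin k) (Fin k) ℂ,
        (∀ c, matrixOpNorm (Γ c) ≤ ‖c‖) →
        (∀ c, ‖c‖ ≤ K * matrixOpNorm (Γ c)) →
        (n : ℝ) ≤ a * K ^ 2 * Real.log k := by
  refine ⟨300, by norm_num, ?_⟩
  intro n k K hK hk Γ hup hlow
  have hKpos : (0:ℝ) < K := lt_of_lt_of_le one_pos hK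
  have hk1 : (1:ℝ) < (k:ℝ) := by exact_mod_cast lt_of_lt_of_le one_lt_two hk
  have hlogk : 0 < Real.log k := Real.log_pos hk1
  rcases Nat.eq_zero_or_pos n with hn0 | hn
  · rw [hn0]
    push_cast
    positivity
  -- setup
  have hn1 : (1:ℝ) ≤ (n:ℝ) := by exact_mod_cast hn
  set Λ : (∀ _ : Fin n, ℂ) →ₗ[ℂ] Matrix (Fin k) (Fin k) ℂ :=
    Γ.comp (WithLp.linearEquiv 1 ℂ (∀ _ : Fin n, ℂ)).symm.toLinearMap with hΛ
  set A : Fin n → Matrix (Fin k) (Fin k) ℂ := fun i => Λ (Pi.single i 1) with hA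
  have hΛapp : ∀ x : ∀ _ : Fin n, ℂ, Λ x = Γ ((WithLp.equiv 1 (∀ _ : Fin n, ℂ)).symm x) :=
    fun x => rfl
  have hAnorm : ∀ i, ‖A i‖ ≤ 1 := by
    intro i
    have h := hup ((WithLp.equiv 1 (∀ _ : Fin n, ℂ)).symm (Pi.single i 1))
    rw [matrixOpNorm_eq_norm, piLp_one_norm] at h
    refine (le_trans (le_of_eq ?_) h).trans (le_of_eq ?_)
    · exact congrArg norm (hΛapp _)
    · rw [Finset.sum_eq_single i]
      · simp
      · intro j _ hj
        simp [Pi.single_apply, hj]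
      · simp
  set S : (Fin n → Bool) → Matrix (Fin k) (Fin k) ℂ :=
    fun ε => ∑ i, (sgn (ε i) : ℂ) • A i with hS
  have hSapp : ∀ ε, S ε = Λ (fun i => (sgn (ε i) : ℂ)) := by
    intro ε
    rw [hS]
    have hdecomp : (fun i => (sgn (ε i) : ℂ)) = ∑ i : Fin n, ((sgn (ε i) : ℂ)) • (Pi.single i 1 : Fin n → ℂ) := by
      funext j
      rw [Finset.sum_apply]
      rw [Finset.sum_eq_single j]
      · simp
      · intro b _ hb
        simp [Pi.single_apply, hb]
      · simp
    rw [hdecomp, map_sum]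
    exact Finset.sum_congr rfl fun i _ => by rw [map_smul]
  have hSlow : ∀ ε, (n:ℝ) / K ≤ ‖S ε‖ := by
    intro ε
    have h := hlow ((WithLp.equiv 1 (∀ _ : Fin n, ℂ)).symm (fun i => (sgn (ε i) : ℂ)))
    rw [matrixOpNorm_eq_norm, piLp_one_norm] at h
    have hns : (∑ i : Fin n, ‖((sgn (ε i) : ℝ) : ℂ)‖) = n := by
      rw [Finset.sum_congr rfl (fun i _ => ?_), Finset.sum_const, Finset.card_univ,
        Fintype.card_fin, nsmul_eq_mul, mul_one]
      rw [Complex.norm_real]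
      rcases Bool.eq_false_or_eq_true (ε i) with hb | hb <;> rw [hb] <;> simp [sgn]
    rw [hns] at h
    rw [div_le_iff₀ hKpos]
    calc (n:ℝ) ≤ K * matrixOpNorm (Γ ((WithLp.equiv 1 (∀ _ : Fin n, ℂ)).symm
        (fun i => (sgn (ε i) : ℂ)))) := h
      _ = ‖S ε‖ * K := by rw [matrixOpNorm_eq_norm, ← hΛapp, ← hSapp, mul_comm]
  -- choice of m
  set r : ℕ := max (⌈Real.log k⌉₊) 2 with hr
  set s : ℕ := Nat.clog 2 r with hsdef
  set m : ℕ := 2^s with hmdef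
  have hr2 : 2 ≤ r := le_max_right _ _
  have hs1 : 1 ≤ s := Nat.clog_pos one_lt_two hr2
  have hm1 : 1 ≤ m := Nat.one_le_two_pow
  have hm0 : m ≠ 0 := by omega
  have hmr : r ≤ m := Nat.le_pow_clog one_lt_two r
  have hlogm : Real.log k ≤ (m:ℝ) := by
    calc Real.log k ≤ (⌈Real.log k⌉₊ : ℝ) := Nat.le_ceil _
      _ ≤ (r : ℝ) := by exact_mod_cast le_max_left _ _
      _ ≤ (m : ℝ) := by exact_mod_cast hmr
  have hm6 : (m:ℝ) ≤ 6 * Real.log k := by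
    have h1 : 2^(s-1) < r := Nat.pow_pred_clog_lt_self one_lt_two (lt_of_lt_of_le one_lt_two hr2)
    have hm_eq : m = 2 * 2^(s-1) := by
      rw [hmdef, ← pow_succ']
      congr 1
      omega
    have h2 : m ≤ 2 * r := by omega
    have hlog2 : (0.6931471803 : ℝ) < Real.log 2 := Real.log_two_gt_d9
    have hlogk2 : Real.log 2 ≤ Real.log k := by
      apply Real.log_le_log (by norm_num)
      exact_mod_cast hk
    have h3 : (r : ℝ) ≤ 3 * Real.log k := by
      rw [hr, Nat.cast_max]
      apply max_le
      · have hceil : (⌈Real.log k⌉₊ : ℝ) < Real.log k + 1 := Nat.ceil_lt_add_one hlogk.le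
        nlinarith
      · norm_num
        nlinarith
    calc (m:ℝ) ≤ 2 * (r:ℝ) := by exact_mod_cast h2
      _ ≤ 2 * (3 * Real.log k) := by linarith
      _ = 6 * Real.log k := by ring
  have hm' : (0:ℝ) < (m:ℝ) := by exact_mod_cast hm1
  -- the word bound
  have hword : ∀ g : Fin m → Fin n × Fin n,
      (Matrix.trace ((List.ofFn fun t => A (g t).1 * star (A (g t).2)).prod)).re ≤ (k:ℝ) := by
    intro g
    have h1 : ‖(List.ofFn fun t => A (g t).1 * star (A (g t).2)).prod‖ ≤ 1 := by
      apply word_norm_le hm0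
      intro t
      calc ‖A (g t).1 * star (A (g t).2)‖ ≤ ‖A (g t).1‖ * ‖star (A (g t).2)‖ := norm_mul_le _ _
        _ = ‖A (g t).1‖ * ‖A (g t).2‖ := by
            rw [show star (A (g t).2) = (A (g t).2).conjTranspose from rfl, Matrix.l2_opNorm_conjTranspose]
        _ ≤ 1 * 1 := mul_le_mul (hAnorm _) (hAnorm _) (norm_nonneg _) zero_le_one
        _ = 1 := mul_one 1
    calc (Matrix.trace ((List.ofFn fun t => A (g t).1 * star (A (g t).2)).prod)).re
        ≤ ‖Matrix.trace ((List.ofFn fun t => A (g t).1 * star (A (g t).2)).prod)‖ :=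
          Complex.re_le_norm _
      _ ≤ k * ‖(List.ofFn fun t => A (g t).1 * star (A (g t).2)).prod‖ := trace_le_opNorm _
      _ ≤ k * 1 := mul_le_mul_of_nonneg_left h1 (by positivity)
      _ = k := mul_one _
  -- the grand chain
  have hchain : (2:ℝ)^n * ((n:ℝ)/K)^(2*m) ≤ (k:ℝ) * ((2:ℝ)^n * (2 * (6*m*n)^m)) := by
    calc (2:ℝ)^n * ((n:ℝ)/K)^(2*m)
        = ∑ _ε : Fin n → Bool, ((n:ℝ)/K)^(2*m) := by
          rw [Finset.sum_const, Finset.card_univ, Fintype.card_fun, Fintype.card_bool,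
            Fintype.card_fin, nsmul_eq_mul]
          push_cast
          ring
      _ ≤ ∑ ε : Fin n → Bool, ‖S ε‖^(2*m) := by
          refine Finset.sum_le_sum fun ε _ => ?_
          exact pow_le_pow_left₀ (by positivity) (hSlow ε) (2*m)
      _ ≤ ∑ ε : Fin n → Bool, (Matrix.trace ((S ε * star (S ε))^m)).re := by
          refine Finset.sum_le_sum fun ε _ => ?_
          rw [hmdef]
          exact key_power_trace (S ε) s hs1
      _ = ∑ g : Fin m → Fin n × Fin n,
            (∑ ε : Fin n → Bool, ∏ t, sgn (ε (g t).1) * sgn (ε (g t).2)) *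
            (Matrix.trace ((List.ofFn fun t => A (g t).1 * star (A (g t).2)).prod)).re := by
          rw [Finset.sum_congr rfl fun ε _ => trace_re_expand A ε m, Finset.sum_comm]
          exact Finset.sum_congr rfl fun g _ => by rw [Finset.sum_mul]
      _ ≤ ∑ g : Fin m → Fin n × Fin n,
            (∑ ε : Fin n → Bool, ∏ t, sgn (ε (g t).1) * sgn (ε (g t).2)) * (k:ℝ) := by
          refine Finset.sum_le_sum fun g _ => ?_
          exact mul_le_mul_of_nonneg_left (hword g) (sum_coef_nonneg g)
      _ = (k:ℝ) * ∑ ε : Fin n → Bool, ((∑ i, sgn (ε i))^2)^m := by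
          rw [← Finset.sum_mul, Finset.sum_comm]
          rw [Finset.sum_congr rfl fun ε _ => sum_g_coef m ε]
          ring
      _ ≤ (k:ℝ) * ((2:ℝ)^n * (2 * (6*m*n)^m)) := by
          have hkh := khintchine n m hn hm1
          have : ∑ ε : Fin n → Bool, ((∑ i, sgn (ε i))^2)^m
              = ∑ ε : Fin n → Bool, (∑ i, sgn (ε i))^(2*m) := by
            exact Finset.sum_congr rfl fun ε _ => by rw [← pow_mul]
          rw [this]
          exact mul_le_mul_of_nonneg_left hkh (by positivity)
  -- arithmetic endgame
  have h2n : (0:ℝ) < (2:ℝ)^n := by positivity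
  have hstep : ((n:ℝ)/K)^(2*m) ≤ (k:ℝ) * (2 * (6*m*n)^m) := by
    have := hchain
    calc ((n:ℝ)/K)^(2*m) = ((2:ℝ)^n * ((n:ℝ)/K)^(2*m)) / (2:ℝ)^n := by field_simp
      _ ≤ ((k:ℝ) * ((2:ℝ)^n * (2 * (6*m*n)^m))) / (2:ℝ)^n := by gcongr
      _ = (k:ℝ) * (2 * (6*m*n)^m) := by field_simp
  have hnm_pos : (0:ℝ) < (n:ℝ)^m := by positivity
  have hnm : (n:ℝ)^m ≤ (2*(k:ℝ)) * (6*(m:ℝ)*K^2)^m := by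
    have h1 : ((n:ℝ)/K)^(2*m) = (n:ℝ)^(2*m) / K^(2*m) := div_pow _ _ _
    have h2 : (n:ℝ)^(2*m) ≤ (k:ℝ) * (2 * (6*m*n)^m) * K^(2*m) := by
      rw [← h1] at *
      calc (n:ℝ)^(2*m) = ((n:ℝ)/K)^(2*m) * K^(2*m) := by
            rw [div_pow]; field_simp
        _ ≤ (k:ℝ) * (2 * (6*m*n)^m) * K^(2*m) := by gcongr
    have h3 : (n:ℝ)^(2*m) = (n:ℝ)^m * (n:ℝ)^m := by rw [two_mul, pow_add]
    have h4 : (6*(m:ℝ)*(n:ℝ))^m = (6*(m:ℝ))^m * (n:ℝ)^m := by rw [← mul_pow]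
    have h5 : (n:ℝ)^m * (n:ℝ)^m ≤ (2*(k:ℝ)) * (6*(m:ℝ))^m * K^(2*m) * (n:ℝ)^m := by
      calc (n:ℝ)^m * (n:ℝ)^m = (n:ℝ)^(2*m) := h3.symm
        _ ≤ (k:ℝ) * (2 * ((6*(m:ℝ))^m * (n:ℝ)^m)) * K^(2*m) := by
            rw [← h4]; exact_mod_cast h2
        _ = (2*(k:ℝ)) * (6*(m:ℝ))^m * K^(2*m) * (n:ℝ)^m := by ring
    have h6 : (n:ℝ)^m ≤ (2*(k:ℝ)) * (6*(m:ℝ))^m * K^(2*m) :=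
      le_of_mul_le_mul_right h5 hnm_pos
    calc (n:ℝ)^m ≤ (2*(k:ℝ)) * (6*(m:ℝ))^m * K^(2*m) := h6
      _ = (2*(k:ℝ)) * ((6*(m:ℝ))^m * (K^2)^m) := by rw [pow_mul]; ring
      _ = (2*(k:ℝ)) * (6*(m:ℝ)*K^2)^m := by rw [← mul_pow]
  have hkexp : (2*(k:ℝ)) ≤ (Real.exp 2)^m := by
    have hk2 : (2:ℝ) ≤ (k:ℝ) := by exact_mod_cast hk
    have h1 : (2*(k:ℝ)) ≤ (k:ℝ)^2 := by nlinarith [hk2]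
    have h2 : (k:ℝ)^2 = Real.exp (2 * Real.log k) := by
      rw [two_mul, Real.exp_add, Real.exp_log (by linarith), sq]
    have h3 : Real.exp (2 * Real.log k) ≤ Real.exp (2 * m) := by
      apply Real.exp_le_exp.mpr
      linarith
    have h4 : Real.exp (2 * (m:ℝ)) = (Real.exp 2)^m := by
      rw [mul_comm, Real.exp_nat_mul]
    linarith [h1, h2.le, h3, h4.le, h4.ge]
  have hfinal : (n:ℝ) ≤ Real.exp 2 * (6*(m:ℝ)*K^2) := by
    have h1 : (n:ℝ)^m ≤ (Real.exp 2 * (6*(m:ℝ)*K^2))^m := by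
      calc (n:ℝ)^m ≤ (2*(k:ℝ)) * (6*(m:ℝ)*K^2)^m := hnm
        _ ≤ (Real.exp 2)^m * (6*(m:ℝ)*K^2)^m := by
            refine mul_le_mul_of_nonneg_right hkexp (by positivity)
        _ = (Real.exp 2 * (6*(m:ℝ)*K^2))^m := by rw [← mul_pow]
    exact le_of_pow_le_pow_left₀ hm0 (by positivity) h1
  have hexp2 : Real.exp 2 ≤ 8 := by
    have h1 : Real.exp 2 = Real.exp 1 * Real.exp 1 := by
      rw [← Real.exp_add]; norm_num
    nlinarith [Real.exp_one_lt_d9, Real.exp_pos 1]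
  calc (n:ℝ) ≤ Real.exp 2 * (6*(m:ℝ)*K^2) := hfinal
    _ ≤ 8 * (6*(m:ℝ)*K^2) := by
        refine mul_le_mul_of_nonneg_right hexp2 (by positivity)
    _ = 48 * (m:ℝ) * K^2 := by ring
    _ ≤ 48 * (6 * Real.log k) * K^2 := by nlinarith [hm6, sq_nonneg K, hKpos]
    _ = 288 * K^2 * Real.log k := by ring
    _ ≤ 300 * K^2 * Real.log k := by nlinarith [hlogk, hKpos, sq_nonneg K]
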